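/- Let (a, b, N) be a triple of positive integers with b ≥ 2 and N not divisible by b, and set α = N mod b, β = b mod (αa), γ = ⌊N/b⌋ mod a. Then N is coprime to both a and b if and only if gcd(α, β) = 1 and gcd(a, α + βγ) = 1. -/

import Mathlib

lemma gcd_emod_aux (m n : ℤ) : Int.gcd m (n % m) = Int.gcd m n := by
  have hn : n = n % m + m * (n / m) := by rw [Int.emod_def]; ring
  apply Nat.dvd_antisymm
  · rw [← Int.natCast_dvd_natCast]
    refine Int.dvd_coe_gcd (Int.gcd_dvd_left _ _) ?_
    conv_rhs => rw [hn]
    exact dvd_add (Int.gcd_dvd_right _ _) (Dvd.dvd.mul_right (Int.gcd_dvd_left _ _) _)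
  · rw [← Int.natCast_dvd_natCast]
    refine Int.dvd_coe_gcd (Int.gcd_dvd_left _ _) ?_
    rw [Int.emod_def]
    exact dvd_sub (Int.gcd_dvd_right _ _) (Dvd.dvd.mul_right (Int.gcd_dvd_left _ _) _)

/-- Let `(a, b, N)` be a triple of positive integers with `b ≥ 2` and `N` not
divisible by `b`, and set `α = N mod b`, `β = b mod (αa)`, `γ = ⌊N/b⌋ mod a`.
Then `N` is coprime to both `a` and `b` iff `gcd(α, β) = 1` and `gcd(a, α + βγ) = 1`. -/
theorem coprime_iff_geomCode_conditions
    (a b N : ℤ) (ha : 1 ≤ a) (hb : 2 ≤ b) (hN : 1 ≤ N) (hnd : ¬ b ∣ N)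
    (α β γ : ℤ)
    (hα : α = N % b) (hβ : β = b % (α * a)) (hγ : γ = (N / b) % a) :
    (Int.gcd N a = 1 ∧ Int.gcd N b = 1) ↔
      (Int.gcd α β = 1 ∧ Int.gcd a (α + β * γ) = 1) := by
  have h1 : Int.gcd N b = Int.gcd α β := by
    rw [Int.gcd_comm N b, ← gcd_emod_aux b N, ← hα, Int.gcd_comm b α,
      ← gcd_emod_aux α b, ← gcd_emod_aux α β]
    congr 1
    rw [hβ, Int.emod_emod_of_dvd b (dvd_mul_right α a)]
  have h2 : Int.gcd N a = Int.gcd a (α + β * γ) := by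
    rw [Int.gcd_comm N a, ← gcd_emod_aux a N, ← gcd_emod_aux a (α + β * γ)]
    congr 1
    have hβa : β ≡ b [ZMOD a] := by
      show β % a = b % a
      rw [hβ]; exact Int.emod_emod_of_dvd b (dvd_mul_left a α)
    have hγa : γ ≡ N / b [ZMOD a] := by
      show γ % a = (N / b) % a
      rw [hγ, Int.emod_emod_of_dvd _ dvd_rfl]
    have hmod : α + β * γ ≡ α + b * (N / b) [ZMOD a] :=
      (Int.ModEq.refl α).add (hβa.mul hγa)
    have heq : α + b * (N / b) = N := by
      have := Int.mul_ediv_add_emod N b; omega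
    rw [heq] at hmod
    exact hmod.symm
  rw [h1, h2, and_comm]
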